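/- Let (𝔖_N)_{N≥1} be a sequence of independent random permutations, with 𝔖_N uniformly distributed on the symmetric group of [N]×[N] (i.e. on the probability space ∏_{N≥1} S([N]²) with the product of uniform measures). Then Y_N(𝔖_N, 𝔖_N)/N³ → 0 almost surely as N → ∞; i.e. almost every realization of (𝔖_N)_N satisfies condition (C). -/

import Mathlib

open MeasureTheory Filter
open Finset

section Counting
variable {α : Type*} [Fintype α] [DecidableEq α]

lemma card_perm_eq_on (s : Finset α) (u : α → α) :
    (Finset.univ.filter fun σ : Equiv.Perm α => ∀ a ∈ s, σ a = u a).card ≤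
      Nat.factorial (Fintype.card α - s.card) := by
  classical
  by_cases hinj : Set.InjOn u s
  · set t : Finset α := s.image u with ht
    have htcard : t.card = s.card := Finset.card_image_of_injOn hinj
    set F := (Finset.univ.filter fun σ : Equiv.Perm α => ∀ a ∈ s, σ a = u a) with hF
    have hmem : ∀ σ ∈ F, ∀ x : α, x ∉ s → σ x ∈ (tᶜ : Finset α) := by
      intro σ hσ x hx
      rw [Finset.mem_compl]
      intro hxt
      rcases Finset.mem_image.1 hxt with ⟨a, ha, hax⟩
      have : σ a = σ x := by rw [(Finset.mem_filter.1 hσ).2 a ha, hax]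
      exact hx (σ.injective this ▸ ha)
    let Φ : F → ((sᶜ : Finset α) ↪ (tᶜ : Finset α)) := fun σ =>
      ⟨fun x => ⟨(σ : Equiv.Perm α) x, hmem σ σ.2 x (Finset.mem_compl.1 x.2)⟩,
       by intro x y hxy; ext; exact (σ : Equiv.Perm α).injective (by simpa using congrArg Subtype.val hxy)⟩
    have hΦ : Function.Injective Φ := by
      intro σ τ h
      ext x
      by_cases hx : x ∈ s
      · rw [(Finset.mem_filter.1 σ.2).2 x hx, (Finset.mem_filter.1 τ.2).2 x hx]
      · have := congrArg (fun f => (f ⟨x, by simpa using hx⟩ : (tᶜ : Finset α)).val)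
          (congrArg Function.Embedding.toFun h)
        simpa [Φ] using this
    have hcard := Fintype.card_le_of_injective Φ hΦ
    rw [Fintype.card_coe] at hcard
    calc F.card ≤ Fintype.card ((sᶜ : Finset α) ↪ (tᶜ : Finset α)) := hcard
      _ = Nat.factorial (Fintype.card α - s.card) := by
          rw [Fintype.card_embedding_eq, Fintype.card_coe, Fintype.card_coe,
            Finset.card_compl, Finset.card_compl, htcard, Nat.descFactorial_self]
  · have : (Finset.univ.filter fun σ : Equiv.Perm α => ∀ a ∈ s, σ a = u a) = ∅ := by
      rw [Finset.filter_eq_empty_iff]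
      intro σ _ hσ
      exact hinj fun a ha b hb hab => σ.injective (by rw [hσ a ha, hσ b hb, hab])
    simp [this]

lemma card_two_eq {a b : α} (hab : a ≠ b) (u v : α) :
    (Finset.univ.filter fun σ : Equiv.Perm α => σ a = u ∧ σ b = v).card ≤
      Nat.factorial (Fintype.card α - 2) := by
  classical
  have h := card_perm_eq_on ({a, b} : Finset α) (fun x => if x = a then u else v)
  rw [Finset.card_insert_of_notMem (by simpa using hab), Finset.card_singleton] at h
  refine le_trans (Finset.card_le_card ?_) h
  intro σ hσ
  rw [Finset.mem_filter] at *
  refine ⟨Finset.mem_univ _, fun x hx => ?_⟩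
  rcases Finset.mem_insert.1 hx with h1 | h1
  · simp [h1, hσ.2.1]
  · rw [Finset.mem_singleton] at h1
    simp [h1, hab.symm, hσ.2.2]

lemma card_four_eq {a b c d : α} (hab : a ≠ b) (hac : a ≠ c) (had : a ≠ d)
    (hbc : b ≠ c) (hbd : b ≠ d) (hcd : c ≠ d) (u v w z : α) :
    (Finset.univ.filter fun σ : Equiv.Perm α =>
      (σ a = u ∧ σ b = v) ∧ (σ c = w ∧ σ d = z)).card ≤
      Nat.factorial (Fintype.card α - 4) := by
  classical
  have h := card_perm_eq_on ({a, b, c, d} : Finset α)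
    (fun x => if x = a then u else if x = b then v else if x = c then w else z)
  have hcard : ({a, b, c, d} : Finset α).card = 4 := by
    rw [Finset.card_insert_of_notMem (by simp [hab, hac, had]),
      Finset.card_insert_of_notMem (by simp [hbc, hbd]),
      Finset.card_insert_of_notMem (by simpa using hcd), Finset.card_singleton]
  rw [hcard] at h
  refine le_trans (Finset.card_le_card ?_) h
  intro σ hσ
  rw [Finset.mem_filter] at *
  refine ⟨Finset.mem_univ _, fun x hx => ?_⟩
  simp only [Finset.mem_insert, Finset.mem_singleton] at hx
  rcases hx with h1 | h1 | h1 | h1 <;> subst h1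
  · simp [hσ.2.1.1]
  · simp [hab.symm, hσ.2.1.2]
  · simp [hac.symm, hbc.symm, hσ.2.2.1]
  · simp [had.symm, hbd.symm, hcd.symm, hσ.2.2.2]

variable {N : ℕ} {g : α → Fin N}

lemma card_pairs (hg : ∀ r, (Finset.univ.filter fun x => g x = r).card ≤ N) :
    (Finset.univ.filter fun p : α × α => g p.1 = g p.2).card ≤ Fintype.card α * N := by
  classical
  have hsub : (Finset.univ.filter fun p : α × α => g p.1 = g p.2) ⊆
      Finset.univ.biUnion (fun x : α => ({x} : Finset α) ×ˢ (Finset.univ.filter fun y => g y = g x)) := by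
    intro p hp
    rw [Finset.mem_filter] at hp
    refine Finset.mem_biUnion.2 ⟨p.1, Finset.mem_univ _, ?_⟩
    rw [Finset.mem_product, Finset.mem_singleton]
    exact ⟨rfl, Finset.mem_filter.2 ⟨Finset.mem_univ _, hp.2.symm⟩⟩
  refine le_trans (Finset.card_le_card hsub) (le_trans (Finset.card_biUnion_le) ?_)
  calc ∑ x : α, (({x} : Finset α) ×ˢ (Finset.univ.filter fun y => g y = g x)).card
      ≤ ∑ _x : α, N := by
        refine Finset.sum_le_sum fun x _ => ?_
        rw [Finset.card_product, Finset.card_singleton, one_mul]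
        exact hg (g x)
    _ = Fintype.card α * N := by simp [Finset.card_univ, mul_comm]

lemma card_one_rel (hg : ∀ r, (Finset.univ.filter fun x => g x = r).card ≤ N)
    {a b : α} (hab : a ≠ b) :
    (Finset.univ.filter fun σ : Equiv.Perm α => g (σ a) = g (σ b)).card ≤
      Fintype.card α * N * Nat.factorial (Fintype.card α - 2) := by
  classical
  set V := (Finset.univ.filter fun p : α × α => g p.1 = g p.2) with hV
  have hsub : (Finset.univ.filter fun σ : Equiv.Perm α => g (σ a) = g (σ b)) ⊆
      V.biUnion (fun p => Finset.univ.filter fun σ : Equiv.Perm α => σ a = p.1 ∧ σ b = p.2) := by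
    intro σ hσ
    rw [Finset.mem_filter] at hσ
    exact Finset.mem_biUnion.2 ⟨(σ a, σ b), Finset.mem_filter.2 ⟨Finset.mem_univ _, hσ.2⟩,
      Finset.mem_filter.2 ⟨Finset.mem_univ _, rfl, rfl⟩⟩
  refine le_trans (Finset.card_le_card hsub) (le_trans Finset.card_biUnion_le ?_)
  calc ∑ p ∈ V, (Finset.univ.filter fun σ : Equiv.Perm α => σ a = p.1 ∧ σ b = p.2).card
      ≤ ∑ _p ∈ V, Nat.factorial (Fintype.card α - 2) :=
        Finset.sum_le_sum fun p _ => card_two_eq hab p.1 p.2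
    _ = V.card * Nat.factorial (Fintype.card α - 2) := by rw [Finset.sum_const, smul_eq_mul]
    _ ≤ Fintype.card α * N * Nat.factorial (Fintype.card α - 2) :=
        Nat.mul_le_mul_right _ (card_pairs hg)

lemma card_two_rel (hg : ∀ r, (Finset.univ.filter fun x => g x = r).card ≤ N)
    {a b c d : α} (hab : a ≠ b) (hac : a ≠ c) (had : a ≠ d)
    (hbc : b ≠ c) (hbd : b ≠ d) (hcd : c ≠ d) :
    (Finset.univ.filter fun σ : Equiv.Perm α => g (σ a) = g (σ b) ∧ g (σ c) = g (σ d)).card ≤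
      (Fintype.card α * N) ^ 2 * Nat.factorial (Fintype.card α - 4) := by
  classical
  set V := (Finset.univ.filter fun p : α × α => g p.1 = g p.2) with hV
  have hsub : (Finset.univ.filter fun σ : Equiv.Perm α => g (σ a) = g (σ b) ∧ g (σ c) = g (σ d)) ⊆
      (V ×ˢ V).biUnion (fun p => Finset.univ.filter fun σ : Equiv.Perm α =>
        (σ a = p.1.1 ∧ σ b = p.1.2) ∧ (σ c = p.2.1 ∧ σ d = p.2.2)) := by
    intro σ hσ
    rw [Finset.mem_filter] at hσ
    refine Finset.mem_biUnion.2 ⟨((σ a, σ b), (σ c, σ d)), ?_, ?_⟩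
    · rw [Finset.mem_product]
      exact ⟨Finset.mem_filter.2 ⟨Finset.mem_univ _, hσ.2.1⟩,
        Finset.mem_filter.2 ⟨Finset.mem_univ _, hσ.2.2⟩⟩
    · exact Finset.mem_filter.2 ⟨Finset.mem_univ _, ⟨rfl, rfl⟩, ⟨rfl, rfl⟩⟩
  refine le_trans (Finset.card_le_card hsub) (le_trans Finset.card_biUnion_le ?_)
  calc ∑ p ∈ V ×ˢ V, (Finset.univ.filter fun σ : Equiv.Perm α =>
        (σ a = p.1.1 ∧ σ b = p.1.2) ∧ (σ c = p.2.1 ∧ σ d = p.2.2)).card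
      ≤ ∑ _p ∈ V ×ˢ V, Nat.factorial (Fintype.card α - 4) :=
        Finset.sum_le_sum fun p _ => card_four_eq hab hac had hbc hbd hcd p.1.1 p.1.2 p.2.1 p.2.2
    _ = (V ×ˢ V).card * Nat.factorial (Fintype.card α - 4) := by rw [Finset.sum_const, smul_eq_mul]
    _ ≤ (Fintype.card α * N) ^ 2 * Nat.factorial (Fintype.card α - 4) := by
        refine Nat.mul_le_mul_right _ ?_
        rw [Finset.card_product, sq]
        exact Nat.mul_le_mul (card_pairs hg) (card_pairs hg)


end Counting

section Triples
variable {N : ℕ}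

abbrev ΩN (N : ℕ) := Fin N × Fin N
abbrev TN (N : ℕ) := Fin N × Fin N × Fin N

def tc1 (x : TN N) : ΩN N := (x.1, x.2.1)
def tc2 (x : TN N) : ΩN N := (x.1, x.2.2)
def tc3 (x : TN N) : ΩN N := (x.2.2, x.2.1)
def tdeg (x : TN N) : Prop := x.2.1 = x.2.2 ∨ x.1 = x.2.2
def tcells (x : TN N) : Finset (ΩN N) := {tc1 x, tc2 x, tc3 x}

instance : DecidablePred (tdeg (N := N)) := fun x => by unfold tdeg; infer_instance

def tcond (g : ΩN N → Fin N) (σ : Equiv.Perm (ΩN N)) (x : TN N) : Prop :=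
  g (σ (tc1 x)) = g (σ (tc2 x)) ∨ g (σ (tc1 x)) = g (σ (tc3 x))

instance (g : ΩN N → Fin N) (σ : Equiv.Perm (ΩN N)) : DecidablePred (tcond g σ) :=
  fun x => by unfold tcond; infer_instance

lemma tc12_ne {x : TN N} (hx : ¬ tdeg x) : tc1 x ≠ tc2 x := by
  intro h; exact hx (Or.inl (congrArg Prod.snd h))

lemma tc13_ne {x : TN N} (hx : ¬ tdeg x) : tc1 x ≠ tc3 x := by
  intro h; exact hx (Or.inr (congrArg Prod.fst h))

lemma mem_tcells_iff {x : TN N} {z : ΩN N} :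
    z ∈ tcells x ↔ z = tc1 x ∨ z = tc2 x ∨ z = tc3 x := by
  simp [tcells]

lemma card_deg : (Finset.univ.filter (tdeg (N := N))).card ≤ 2 * N ^ 2 := by
  classical
  have hsub : (Finset.univ.filter (tdeg (N := N))) ⊆
      (Finset.univ.filter fun x : TN N => x.2.1 = x.2.2) ∪
      (Finset.univ.filter fun x : TN N => x.1 = x.2.2) := by
    intro x hx
    rcases Finset.mem_filter.1 hx with ⟨_, h | h⟩
    · exact Finset.mem_union_left _ (Finset.mem_filter.2 ⟨Finset.mem_univ _, h⟩)
    · exact Finset.mem_union_right _ (Finset.mem_filter.2 ⟨Finset.mem_univ _, h⟩)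
  refine le_trans (Finset.card_le_card hsub) (le_trans (Finset.card_union_le _ _) ?_)
  have h1 : (Finset.univ.filter fun x : TN N => x.2.1 = x.2.2).card ≤ N ^ 2 := by
    have := Finset.card_le_card_of_injOn
      (s := Finset.univ.filter fun x : TN N => x.2.1 = x.2.2) (t := Finset.univ)
      (fun x : TN N => (x.1, x.2.1)) (fun x _ => Finset.mem_univ _) ?_
    · simpa [sq] using this
    · intro x hx y hy hxy
      rw [Finset.coe_filter] at hx hy
      simp only [Prod.mk.injEq] at hxy
      have h3 : x.2.2 = y.2.2 := by rw [← hx.2, ← hy.2]; exact hxy.2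
      exact Prod.ext hxy.1 (Prod.ext hxy.2 h3)
  have h2 : (Finset.univ.filter fun x : TN N => x.1 = x.2.2).card ≤ N ^ 2 := by
    have := Finset.card_le_card_of_injOn
      (s := Finset.univ.filter fun x : TN N => x.1 = x.2.2) (t := Finset.univ)
      (fun x : TN N => (x.1, x.2.1)) (fun x _ => Finset.mem_univ _) ?_
    · simpa [sq] using this
    · intro x hx y hy hxy
      rw [Finset.coe_filter] at hx hy
      simp only [Prod.mk.injEq] at hxy
      have h3 : x.2.2 = y.2.2 := by rw [← hx.2, ← hy.2]; exact hxy.1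
      exact Prod.ext hxy.1 (Prod.ext hxy.2 h3)
  omega

lemma card_cell_mem (z : ΩN N) :
    (Finset.univ.filter fun y : TN N => z ∈ tcells y).card ≤ 3 * N := by
  classical
  have hsub : (Finset.univ.filter fun y : TN N => z ∈ tcells y) ⊆
      (Finset.univ.filter fun y : TN N => z = tc1 y) ∪
      ((Finset.univ.filter fun y : TN N => z = tc2 y) ∪
       (Finset.univ.filter fun y : TN N => z = tc3 y)) := by
    intro y hy
    rcases Finset.mem_filter.1 hy with ⟨_, hz⟩
    rcases mem_tcells_iff.1 hz with h | h | h
    · exact Finset.mem_union_left _ (Finset.mem_filter.2 ⟨Finset.mem_univ _, h⟩)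
    · exact Finset.mem_union_right _ (Finset.mem_union_left _ (Finset.mem_filter.2 ⟨Finset.mem_univ _, h⟩))
    · exact Finset.mem_union_right _ (Finset.mem_union_right _ (Finset.mem_filter.2 ⟨Finset.mem_univ _, h⟩))
  refine le_trans (Finset.card_le_card hsub) (le_trans (Finset.card_union_le _ _) ?_)
  have e1 : (Finset.univ.filter fun y : TN N => z = tc1 y).card ≤ N := by
    have := Finset.card_le_card_of_injOn
      (s := Finset.univ.filter fun y : TN N => z = tc1 y) (t := Finset.univ)
      (fun y : TN N => y.2.2) (fun y _ => Finset.mem_univ _) ?_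
    · simpa using this
    · intro x hx y hy hxy
      rw [Finset.coe_filter] at hx hy
      have h1 : x.1 = y.1 := by
        rw [show x.1 = (tc1 x).1 from rfl, ← hx.2, show y.1 = (tc1 y).1 from rfl, ← hy.2]
      have h2 : x.2.1 = y.2.1 := by
        rw [show x.2.1 = (tc1 x).2 from rfl, ← hx.2, show y.2.1 = (tc1 y).2 from rfl, ← hy.2]
      exact Prod.ext h1 (Prod.ext h2 hxy)
  have e2 : (Finset.univ.filter fun y : TN N => z = tc2 y).card ≤ N := by
    have := Finset.card_le_card_of_injOn
      (s := Finset.univ.filter fun y : TN N => z = tc2 y) (t := Finset.univ)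
      (fun y : TN N => y.2.1) (fun y _ => Finset.mem_univ _) ?_
    · simpa using this
    · intro x hx y hy hxy
      rw [Finset.coe_filter] at hx hy
      have h1 : x.1 = y.1 := by
        rw [show x.1 = (tc2 x).1 from rfl, ← hx.2, show y.1 = (tc2 y).1 from rfl, ← hy.2]
      have h3 : x.2.2 = y.2.2 := by
        rw [show x.2.2 = (tc2 x).2 from rfl, ← hx.2, show y.2.2 = (tc2 y).2 from rfl, ← hy.2]
      exact Prod.ext h1 (Prod.ext hxy h3)
  have e3 : (Finset.univ.filter fun y : TN N => z = tc3 y).card ≤ N := by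
    have := Finset.card_le_card_of_injOn
      (s := Finset.univ.filter fun y : TN N => z = tc3 y) (t := Finset.univ)
      (fun y : TN N => y.1) (fun y _ => Finset.mem_univ _) ?_
    · simpa using this
    · intro x hx y hy hxy
      rw [Finset.coe_filter] at hx hy
      have h2 : x.2.1 = y.2.1 := by
        rw [show x.2.1 = (tc3 x).2 from rfl, ← hx.2, show y.2.1 = (tc3 y).2 from rfl, ← hy.2]
      have h3 : x.2.2 = y.2.2 := by
        rw [show x.2.2 = (tc3 x).1 from rfl, ← hx.2, show y.2.2 = (tc3 y).1 from rfl, ← hy.2]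
      exact Prod.ext hxy (Prod.ext h2 h3)
  have e23 := Finset.card_union_le (Finset.univ.filter fun y : TN N => z = tc2 y)
    (Finset.univ.filter fun y : TN N => z = tc3 y)
  omega

lemma card_nbr (x : TN N) :
    (Finset.univ.filter fun y : TN N => ¬ Disjoint (tcells x) (tcells y)).card ≤ 9 * N := by
  classical
  have hsub : (Finset.univ.filter fun y : TN N => ¬ Disjoint (tcells x) (tcells y)) ⊆
      (tcells x).biUnion fun z => Finset.univ.filter fun y : TN N => z ∈ tcells y := by
    intro y hy
    rcases Finset.mem_filter.1 hy with ⟨_, hnd⟩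
    rcases Finset.not_disjoint_iff.1 hnd with ⟨z, hz1, hz2⟩
    exact Finset.mem_biUnion.2 ⟨z, hz1, Finset.mem_filter.2 ⟨Finset.mem_univ _, hz2⟩⟩
  refine le_trans (Finset.card_le_card hsub) (le_trans Finset.card_biUnion_le ?_)
  calc ∑ z ∈ tcells x, (Finset.univ.filter fun y : TN N => z ∈ tcells y).card
      ≤ ∑ _z ∈ tcells x, 3 * N := Finset.sum_le_sum fun z _ => card_cell_mem z
    _ = (tcells x).card * (3 * N) := by rw [Finset.sum_const, smul_eq_mul]
    _ ≤ 3 * (3 * N) := by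
        refine Nat.mul_le_mul_right _ ?_
        exact le_trans (Finset.card_insert_le _ _)
          (Nat.succ_le_succ (le_trans (Finset.card_insert_le _ _) (by simp)))
    _ = 9 * N := by ring



lemma cardΩ : Fintype.card (ΩN N) = N ^ 2 := by simp [sq]

lemma cardT : Fintype.card (TN N) = N ^ 3 := by simp [pow_succ, sq]; ring

lemma card_cond_single (g : ΩN N → Fin N)
    (hg : ∀ r, (Finset.univ.filter fun u => g u = r).card ≤ N)
    {x : TN N} (hx : ¬ tdeg x) :
    (Finset.univ.filter fun σ : Equiv.Perm (ΩN N) => tcond g σ x).card ≤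
      2 * (N ^ 2 * N * Nat.factorial (N ^ 2 - 2)) := by
  classical
  have heq : (Finset.univ.filter fun σ : Equiv.Perm (ΩN N) => tcond g σ x) =
      (Finset.univ.filter fun σ : Equiv.Perm (ΩN N) => g (σ (tc1 x)) = g (σ (tc2 x))) ∪
      (Finset.univ.filter fun σ : Equiv.Perm (ΩN N) => g (σ (tc1 x)) = g (σ (tc3 x))) := by
    rw [← Finset.filter_or]; rfl
  rw [heq]
  refine le_trans (Finset.card_union_le _ _) ?_
  have b1 := card_one_rel hg (tc12_ne hx)
  have b2 := card_one_rel hg (tc13_ne hx)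
  rw [cardΩ] at b1 b2
  omega

set_option maxHeartbeats 1000000 in
lemma card_cond_pair (g : ΩN N → Fin N)
    (hg : ∀ r, (Finset.univ.filter fun u => g u = r).card ≤ N)
    {x y : TN N} (hx : ¬ tdeg x) (hy : ¬ tdeg y)
    (hd : Disjoint (tcells x) (tcells y)) :
    (Finset.univ.filter fun σ : Equiv.Perm (ΩN N) => tcond g σ x ∧ tcond g σ y).card ≤
      4 * ((N ^ 2 * N) ^ 2 * Nat.factorial (N ^ 2 - 4)) := by
  classical
  have hcross : ∀ {p q : ΩN N}, p ∈ tcells x → q ∈ tcells y → p ≠ q := by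
    intro p q hp hq h
    exact Finset.disjoint_left.1 hd hp (h ▸ hq)
  have m1x : tc1 x ∈ tcells x := mem_tcells_iff.2 (Or.inl rfl)
  have m2x : tc2 x ∈ tcells x := mem_tcells_iff.2 (Or.inr (Or.inl rfl))
  have m3x : tc3 x ∈ tcells x := mem_tcells_iff.2 (Or.inr (Or.inr rfl))
  have m1y : tc1 y ∈ tcells y := mem_tcells_iff.2 (Or.inl rfl)
  have m2y : tc2 y ∈ tcells y := mem_tcells_iff.2 (Or.inr (Or.inl rfl))
  have m3y : tc3 y ∈ tcells y := mem_tcells_iff.2 (Or.inr (Or.inr rfl))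
  have hsub : (Finset.univ.filter fun σ : Equiv.Perm (ΩN N) => tcond g σ x ∧ tcond g σ y) ⊆
      ((Finset.univ.filter fun σ : Equiv.Perm (ΩN N) =>
          g (σ (tc1 x)) = g (σ (tc2 x)) ∧ g (σ (tc1 y)) = g (σ (tc2 y))) ∪
       (Finset.univ.filter fun σ : Equiv.Perm (ΩN N) =>
          g (σ (tc1 x)) = g (σ (tc2 x)) ∧ g (σ (tc1 y)) = g (σ (tc3 y)))) ∪
      ((Finset.univ.filter fun σ : Equiv.Perm (ΩN N) =>
          g (σ (tc1 x)) = g (σ (tc3 x)) ∧ g (σ (tc1 y)) = g (σ (tc2 y))) ∪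
       (Finset.univ.filter fun σ : Equiv.Perm (ΩN N) =>
          g (σ (tc1 x)) = g (σ (tc3 x)) ∧ g (σ (tc1 y)) = g (σ (tc3 y)))) := by
    intro σ hσ
    rcases Finset.mem_filter.1 hσ with ⟨_, hcx, hcy⟩
    rcases hcx with h1 | h1 <;> rcases hcy with h2 | h2 <;>
      simp only [Finset.mem_union, Finset.mem_filter] <;> tauto
  refine le_trans (Finset.card_le_card hsub) ?_
  refine le_trans (Finset.card_union_le _ _) ?_
  have u1 := Finset.card_union_le
    (Finset.univ.filter fun σ : Equiv.Perm (ΩN N) =>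
        g (σ (tc1 x)) = g (σ (tc2 x)) ∧ g (σ (tc1 y)) = g (σ (tc2 y)))
    (Finset.univ.filter fun σ : Equiv.Perm (ΩN N) =>
        g (σ (tc1 x)) = g (σ (tc2 x)) ∧ g (σ (tc1 y)) = g (σ (tc3 y)))
  have u2 := Finset.card_union_le
    (Finset.univ.filter fun σ : Equiv.Perm (ΩN N) =>
        g (σ (tc1 x)) = g (σ (tc3 x)) ∧ g (σ (tc1 y)) = g (σ (tc2 y)))
    (Finset.univ.filter fun σ : Equiv.Perm (ΩN N) =>
        g (σ (tc1 x)) = g (σ (tc3 x)) ∧ g (σ (tc1 y)) = g (σ (tc3 y)))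
  have b11 := card_two_rel hg (tc12_ne hx) (hcross m1x m1y) (hcross m1x m2y)
    (hcross m2x m1y) (hcross m2x m2y) (tc12_ne hy)
  have b12 := card_two_rel hg (tc12_ne hx) (hcross m1x m1y) (hcross m1x m3y)
    (hcross m2x m1y) (hcross m2x m3y) (tc13_ne hy)
  have b21 := card_two_rel hg (tc13_ne hx) (hcross m1x m1y) (hcross m1x m2y)
    (hcross m3x m1y) (hcross m3x m2y) (tc12_ne hy)
  have b22 := card_two_rel hg (tc13_ne hx) (hcross m1x m1y) (hcross m1x m3y)
    (hcross m3x m1y) (hcross m3x m3y) (tc13_ne hy)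
  rw [cardΩ] at b11 b12 b21 b22
  omega

end Triples

set_option maxHeartbeats 1600000 in
lemma sum_cnt_sq (N : ℕ) (hN : 3 ≤ N) (g : ΩN N → Fin N)
    (hg : ∀ r, (Finset.univ.filter fun u => g u = r).card ≤ N) :
    (∑ σ : Equiv.Perm (ΩN N), ((Finset.univ.filter (tcond g σ)).card) ^ 2) ≤
      100 * N ^ 4 * Nat.factorial (N ^ 2) := by
  classical
  set F : TN N × TN N → ℕ := fun p =>
    (Finset.univ.filter fun σ : Equiv.Perm (ΩN N) => tcond g σ p.1 ∧ tcond g σ p.2).card with hF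
  have step1 : (∑ σ : Equiv.Perm (ΩN N), ((Finset.univ.filter (tcond g σ)).card) ^ 2) =
      ∑ p : TN N × TN N, F p := by
    have h1 : ∀ σ : Equiv.Perm (ΩN N), ((Finset.univ.filter (tcond g σ)).card) ^ 2 =
        ∑ p : TN N × TN N, (if tcond g σ p.1 ∧ tcond g σ p.2 then 1 else 0) := by
      intro σ
      rw [Finset.card_filter, sq, Finset.sum_mul_sum]
      conv_rhs => rw [Fintype.sum_prod_type]
      refine Finset.sum_congr rfl fun i _ => Finset.sum_congr rfl fun j _ => ?_
      by_cases h1 : tcond g σ i <;> by_cases h2 : tcond g σ j <;> simp [h1, h2]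
    rw [Finset.sum_congr rfl fun σ _ => h1 σ, Finset.sum_comm]
    exact Finset.sum_congr rfl fun p _ => (Finset.card_filter _ _).symm
  rw [step1]
  set sA := Finset.univ.filter (fun p : TN N × TN N => tdeg p.1 ∧ tdeg p.2) with hsA
  set sB1 := Finset.univ.filter (fun p : TN N × TN N => tdeg p.1 ∧ ¬ tdeg p.2) with hsB1
  set sB2 := Finset.univ.filter (fun p : TN N × TN N => ¬ tdeg p.1 ∧ tdeg p.2) with hsB2
  set sC := Finset.univ.filter (fun p : TN N × TN N =>
    (¬ tdeg p.1 ∧ ¬ tdeg p.2) ∧ ¬ Disjoint (tcells p.1) (tcells p.2)) with hsC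
  set sD := Finset.univ.filter (fun p : TN N × TN N =>
    (¬ tdeg p.1 ∧ ¬ tdeg p.2) ∧ Disjoint (tcells p.1) (tcells p.2)) with hsD
  have hunionle : ∀ (s t : Finset (TN N × TN N)),
      ∑ p ∈ s ∪ t, F p ≤ ∑ p ∈ s, F p + ∑ p ∈ t, F p := by
    intro s t
    exact le_trans (Nat.le_add_right _ _) (le_of_eq (Finset.sum_union_inter))
  have hcover : (Finset.univ : Finset (TN N × TN N)) = sA ∪ sB1 ∪ sB2 ∪ sC ∪ sD := by
    refine Finset.eq_of_subset_of_card_le (fun p _ => ?_) (Finset.card_le_univ _)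
    simp only [hsA, hsB1, hsB2, hsC, hsD, Finset.mem_union, Finset.mem_filter,
      Finset.mem_univ, true_and]
    by_cases d1 : tdeg p.1 <;> by_cases d2 : tdeg p.2 <;>
      by_cases dd : Disjoint (tcells p.1) (tcells p.2) <;> tauto
  rw [hcover]
  refine le_trans (le_trans (hunionle _ _) (Nat.add_le_add_right (le_trans (hunionle _ _)
    (Nat.add_le_add_right (le_trans (hunionle _ _) (Nat.add_le_add_right (hunionle _ _) _)) _)) _)) ?_
  have hperm : Fintype.card (Equiv.Perm (ΩN N)) = Nat.factorial (N ^ 2) := by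
    rw [Fintype.card_perm, cardΩ]
  have hFle : ∀ p : TN N × TN N, F p ≤ Nat.factorial (N ^ 2) := by
    intro p
    calc F p ≤ (Finset.univ : Finset (Equiv.Perm (ΩN N))).card :=
        Finset.card_le_card (Finset.filter_subset _ _)
      _ = Nat.factorial (N ^ 2) := by rw [Finset.card_univ, hperm]
  have hFle1 : ∀ p : TN N × TN N, ¬ tdeg p.1 →
      F p ≤ 2 * (N ^ 2 * N * Nat.factorial (N ^ 2 - 2)) := by
    intro p hp
    refine le_trans (Finset.card_le_card ?_) (card_cond_single g hg hp)
    intro σ hσ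
    exact Finset.mem_filter.2 ⟨Finset.mem_univ _, (Finset.mem_filter.1 hσ).2.1⟩
  have hFle2 : ∀ p : TN N × TN N, ¬ tdeg p.2 →
      F p ≤ 2 * (N ^ 2 * N * Nat.factorial (N ^ 2 - 2)) := by
    intro p hp
    refine le_trans (Finset.card_le_card ?_) (card_cond_single g hg hp)
    intro σ hσ
    exact Finset.mem_filter.2 ⟨Finset.mem_univ _, (Finset.mem_filter.1 hσ).2.2⟩
  have hcT : (Finset.univ : Finset (TN N)).card = N ^ 3 := by rw [Finset.card_univ, cardT]
  have hcardA : sA.card ≤ (2 * N ^ 2) * (2 * N ^ 2) := by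
    have hsub : sA ⊆ (Finset.univ.filter (tdeg (N := N))) ×ˢ (Finset.univ.filter (tdeg (N := N))) := by
      intro p hp
      rcases Finset.mem_filter.1 hp with ⟨_, h1, h2⟩
      exact Finset.mem_product.2 ⟨Finset.mem_filter.2 ⟨Finset.mem_univ _, h1⟩,
        Finset.mem_filter.2 ⟨Finset.mem_univ _, h2⟩⟩
    refine le_trans (Finset.card_le_card hsub) ?_
    rw [Finset.card_product]
    exact Nat.mul_le_mul card_deg card_deg
  have hcardB1 : sB1.card ≤ (2 * N ^ 2) * N ^ 3 := by
    have hsub : sB1 ⊆ (Finset.univ.filter (tdeg (N := N))) ×ˢ (Finset.univ : Finset (TN N)) := by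
      intro p hp
      rcases Finset.mem_filter.1 hp with ⟨_, h1, _⟩
      exact Finset.mem_product.2 ⟨Finset.mem_filter.2 ⟨Finset.mem_univ _, h1⟩, Finset.mem_univ _⟩
    refine le_trans (Finset.card_le_card hsub) ?_
    rw [Finset.card_product, hcT]
    exact Nat.mul_le_mul_right _ card_deg
  have hcardB2 : sB2.card ≤ N ^ 3 * (2 * N ^ 2) := by
    have hsub : sB2 ⊆ (Finset.univ : Finset (TN N)) ×ˢ (Finset.univ.filter (tdeg (N := N))) := by
      intro p hp
      rcases Finset.mem_filter.1 hp with ⟨_, _, h2⟩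
      exact Finset.mem_product.2 ⟨Finset.mem_univ _, Finset.mem_filter.2 ⟨Finset.mem_univ _, h2⟩⟩
    refine le_trans (Finset.card_le_card hsub) ?_
    rw [Finset.card_product, hcT]
    exact Nat.mul_le_mul_left _ card_deg
  have hcardC : sC.card ≤ N ^ 3 * (9 * N) := by
    have hsub : sC ⊆ Finset.univ.biUnion (fun x : TN N =>
        ({x} : Finset (TN N)) ×ˢ (Finset.univ.filter fun y : TN N =>
          ¬ Disjoint (tcells x) (tcells y))) := by
      intro p hp
      rcases Finset.mem_filter.1 hp with ⟨_, _, hnd⟩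
      refine Finset.mem_biUnion.2 ⟨p.1, Finset.mem_univ _, ?_⟩
      rw [Finset.mem_product, Finset.mem_singleton]
      exact ⟨rfl, Finset.mem_filter.2 ⟨Finset.mem_univ _, hnd⟩⟩
    refine le_trans (Finset.card_le_card hsub) (le_trans Finset.card_biUnion_le ?_)
    calc ∑ x : TN N, (({x} : Finset (TN N)) ×ˢ (Finset.univ.filter fun y : TN N =>
            ¬ Disjoint (tcells x) (tcells y))).card
        ≤ ∑ _x : TN N, 9 * N := by
          refine Finset.sum_le_sum fun x _ => ?_
          rw [Finset.card_product, Finset.card_singleton, one_mul]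
          exact card_nbr x
      _ = N ^ 3 * (9 * N) := by rw [Finset.sum_const, smul_eq_mul, Finset.card_univ, cardT]
  have hcardD : sD.card ≤ N ^ 3 * N ^ 3 := by
    calc sD.card ≤ (Finset.univ : Finset (TN N × TN N)).card := Finset.card_le_univ _
      _ = N ^ 3 * N ^ 3 := by rw [Finset.card_univ, Fintype.card_prod, cardT]
  have hsumA : ∑ p ∈ sA, F p ≤ ((2 * N ^ 2) * (2 * N ^ 2)) * Nat.factorial (N ^ 2) := by
    calc ∑ p ∈ sA, F p ≤ ∑ _p ∈ sA, Nat.factorial (N ^ 2) := Finset.sum_le_sum fun p _ => hFle p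
      _ = sA.card * Nat.factorial (N ^ 2) := by rw [Finset.sum_const, smul_eq_mul]
      _ ≤ _ := Nat.mul_le_mul_right _ hcardA
  have hsumB1 : ∑ p ∈ sB1, F p ≤
      ((2 * N ^ 2) * N ^ 3) * (2 * (N ^ 2 * N * Nat.factorial (N ^ 2 - 2))) := by
    calc ∑ p ∈ sB1, F p ≤ ∑ p ∈ sB1, 2 * (N ^ 2 * N * Nat.factorial (N ^ 2 - 2)) :=
          Finset.sum_le_sum fun p hp => hFle2 p (Finset.mem_filter.1 hp).2.2
      _ = sB1.card * _ := by rw [Finset.sum_const, smul_eq_mul]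
      _ ≤ _ := Nat.mul_le_mul_right _ hcardB1
  have hsumB2 : ∑ p ∈ sB2, F p ≤
      (N ^ 3 * (2 * N ^ 2)) * (2 * (N ^ 2 * N * Nat.factorial (N ^ 2 - 2))) := by
    calc ∑ p ∈ sB2, F p ≤ ∑ p ∈ sB2, 2 * (N ^ 2 * N * Nat.factorial (N ^ 2 - 2)) :=
          Finset.sum_le_sum fun p hp => hFle1 p (Finset.mem_filter.1 hp).2.1
      _ = sB2.card * _ := by rw [Finset.sum_const, smul_eq_mul]
      _ ≤ _ := Nat.mul_le_mul_right _ hcardB2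
  have hsumC : ∑ p ∈ sC, F p ≤
      (N ^ 3 * (9 * N)) * (2 * (N ^ 2 * N * Nat.factorial (N ^ 2 - 2))) := by
    calc ∑ p ∈ sC, F p ≤ ∑ p ∈ sC, 2 * (N ^ 2 * N * Nat.factorial (N ^ 2 - 2)) :=
          Finset.sum_le_sum fun p hp => hFle1 p (Finset.mem_filter.1 hp).2.1.1
      _ = sC.card * _ := by rw [Finset.sum_const, smul_eq_mul]
      _ ≤ _ := Nat.mul_le_mul_right _ hcardC
  have hsumD : ∑ p ∈ sD, F p ≤
      (N ^ 3 * N ^ 3) * (4 * ((N ^ 2 * N) ^ 2 * Nat.factorial (N ^ 2 - 4))) := by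
    calc ∑ p ∈ sD, F p ≤ ∑ p ∈ sD, 4 * ((N ^ 2 * N) ^ 2 * Nat.factorial (N ^ 2 - 4)) := by
          refine Finset.sum_le_sum fun p hp => ?_
          rcases Finset.mem_filter.1 hp with ⟨_, ⟨h1, h2⟩, h3⟩
          exact card_cond_pair g hg h1 h2 h3
      _ = sD.card * _ := by rw [Finset.sum_const, smul_eq_mul]
      _ ≤ _ := Nat.mul_le_mul_right _ hcardD
  -- final arithmetic
  have h9 : 9 ≤ N * N := Nat.mul_le_mul hN hN
  have hsqN : N ^ 2 = N * N := sq N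
  obtain ⟨m, hm⟩ : ∃ m, N ^ 2 = m + 4 := ⟨N ^ 2 - 4, by omega⟩
  have hNm : N * N = m + 4 := by omega
  have hm5 : 5 ≤ m := by omega
  have h3N : 3 * N ≤ N * N := Nat.mul_le_mul_right N hN
  have hNle : N ≤ m + 3 := by omega
  have efac : ∀ k : ℕ, Nat.factorial (k + 2) = (k + 2) * ((k + 1) * Nat.factorial k) := by
    intro k
    rw [Nat.factorial_succ, Nat.factorial_succ]
  have hf2 : Nat.factorial (N ^ 2) = (m + 4) * ((m + 3) * Nat.factorial (N ^ 2 - 2)) := by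
    rw [hm, show m + 4 - 2 = m + 2 by omega]
    exact efac (m + 2)
  have hf4 : Nat.factorial (N ^ 2) =
      (m + 4) * ((m + 3) * ((m + 2) * ((m + 1) * Nat.factorial (N ^ 2 - 4)))) := by
    rw [hm, Nat.add_sub_cancel]
    calc Nat.factorial (m + 4) = (m + 4) * ((m + 3) * Nat.factorial (m + 2)) := efac (m + 2)
      _ = (m + 4) * ((m + 3) * ((m + 2) * ((m + 1) * Nat.factorial m))) := by rw [efac m]
  set Y := N ^ 4 * Nat.factorial (N ^ 2) with hY
  have t1 : ((2 * N ^ 2) * (2 * N ^ 2)) * Nat.factorial (N ^ 2) ≤ 4 * Y := by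
    rw [hY]
    exact le_of_eq (by ring)
  have t2 : ((2 * N ^ 2) * N ^ 3) * (2 * (N ^ 2 * N * Nat.factorial (N ^ 2 - 2))) ≤ 8 * Y := by
    have e1 : ((2 * N ^ 2) * N ^ 3) * (2 * (N ^ 2 * N * Nat.factorial (N ^ 2 - 2))) =
        (N ^ 4 * ((m + 4) * (4 * (m + 4)))) * Nat.factorial (N ^ 2 - 2) := by
      rw [← hNm, hsqN]; ring
    have e2 : 8 * Y = (N ^ 4 * ((m + 4) * (8 * (m + 3)))) * Nat.factorial (N ^ 2 - 2) := by
      rw [hY, hf2]; ring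
    rw [e1, e2]
    refine Nat.mul_le_mul_right _ (Nat.mul_le_mul_left _ (Nat.mul_le_mul_left _ (by omega)))
  have t3 : (N ^ 3 * (2 * N ^ 2)) * (2 * (N ^ 2 * N * Nat.factorial (N ^ 2 - 2))) ≤ 8 * Y := by
    have e1 : (N ^ 3 * (2 * N ^ 2)) * (2 * (N ^ 2 * N * Nat.factorial (N ^ 2 - 2))) =
        (N ^ 4 * ((m + 4) * (4 * (m + 4)))) * Nat.factorial (N ^ 2 - 2) := by
      rw [← hNm, hsqN]; ring
    have e2 : 8 * Y = (N ^ 4 * ((m + 4) * (8 * (m + 3)))) * Nat.factorial (N ^ 2 - 2) := by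
      rw [hY, hf2]; ring
    rw [e1, e2]
    refine Nat.mul_le_mul_right _ (Nat.mul_le_mul_left _ (Nat.mul_le_mul_left _ (by omega)))
  have t4 : (N ^ 3 * (9 * N)) * (2 * (N ^ 2 * N * Nat.factorial (N ^ 2 - 2))) ≤ 18 * Y := by
    have e1 : (N ^ 3 * (9 * N)) * (2 * (N ^ 2 * N * Nat.factorial (N ^ 2 - 2))) =
        (N ^ 4 * ((m + 4) * (18 * N))) * Nat.factorial (N ^ 2 - 2) := by
      rw [← hNm, hsqN]; ring
    have e2 : 18 * Y = (N ^ 4 * ((m + 4) * (18 * (m + 3)))) * Nat.factorial (N ^ 2 - 2) := by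
      rw [hY, hf2]; ring
    rw [e1, e2]
    refine Nat.mul_le_mul_right _ (Nat.mul_le_mul_left _ (Nat.mul_le_mul_left _ (by omega)))
  have t5 : (N ^ 3 * N ^ 3) * (4 * ((N ^ 2 * N) ^ 2 * Nat.factorial (N ^ 2 - 4))) ≤ 62 * Y := by
    have e1 : (N ^ 3 * N ^ 3) * (4 * ((N ^ 2 * N) ^ 2 * Nat.factorial (N ^ 2 - 4))) =
        (N ^ 4 * ((m + 4) * (4 * ((m + 4) * ((m + 4) * (m + 4)))))) * Nat.factorial (N ^ 2 - 4) := by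
      rw [← hNm, hsqN]; ring
    have e2 : 62 * Y =
        (N ^ 4 * ((m + 4) * (62 * ((m + 3) * ((m + 2) * (m + 1)))))) * Nat.factorial (N ^ 2 - 4) := by
      rw [hY, hf4]; ring
    have key : 4 * ((m + 4) * ((m + 4) * (m + 4))) ≤ 62 * ((m + 3) * ((m + 2) * (m + 1))) := by
      have expand : 62 * ((m + 3) * ((m + 2) * (m + 1))) =
          4 * ((m + 4) * ((m + 4) * (m + 4))) + (58 * (m * m * m) + 324 * (m * m) + 490 * m + 116) := by
        ring
      rw [expand]
      exact Nat.le_add_right _ _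
    rw [e1, e2]
    exact Nat.mul_le_mul_right _ (Nat.mul_le_mul_left _ (Nat.mul_le_mul_left _ key))
  have hfin : 4 * Y + 8 * Y + 8 * Y + 18 * Y + 62 * Y = 100 * N ^ 4 * Nat.factorial (N ^ 2) := by
    rw [hY]; ring
  omega

instance permMS (N : ℕ) : MeasurableSpace (Equiv.Perm (Fin N × Fin N)) := ⊤

/-- `Y_N(σ,τ)`. -/
def Ycnt (N : ℕ) (σ τ : Equiv.Perm (Fin N × Fin N)) : ℕ :=
  (Finset.univ.filter fun x : Fin N × Fin N × Fin N =>
    (σ (x.1, x.2.1)).1 = (τ (x.1, x.2.2)).1 ∨ (σ (x.1, x.2.1)).1 = (τ (x.2.2, x.2.1)).1).card +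
  (Finset.univ.filter fun x : Fin N × Fin N × Fin N =>
    (σ (x.1, x.2.1)).2 = (τ (x.1, x.2.2)).2 ∨ (σ (x.1, x.2.1)).2 = (τ (x.2.2, x.2.1)).2).card

lemma fiber_fst (N : ℕ) (r : Fin N) :
    (Finset.univ.filter fun u : ΩN N => Prod.fst u = r).card ≤ N := by
  classical
  have := Finset.card_le_card_of_injOn
    (s := Finset.univ.filter fun u : ΩN N => Prod.fst u = r) (t := Finset.univ)
    (fun u : ΩN N => u.2) (fun u _ => Finset.mem_univ _) ?_
  · simpa using this
  · intro x hx y hy hxy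
    rw [Finset.coe_filter] at hx hy
    exact Prod.ext (hx.2.trans hy.2.symm) hxy

lemma fiber_snd (N : ℕ) (r : Fin N) :
    (Finset.univ.filter fun u : ΩN N => Prod.snd u = r).card ≤ N := by
  classical
  have := Finset.card_le_card_of_injOn
    (s := Finset.univ.filter fun u : ΩN N => Prod.snd u = r) (t := Finset.univ)
    (fun u : ΩN N => u.1) (fun u _ => Finset.mem_univ _) ?_
  · simpa using this
  · intro x hx y hy hxy
    rw [Finset.coe_filter] at hx hy
    exact Prod.ext hxy (hx.2.trans hy.2.symm)

lemma Ycnt_eq (N : ℕ) (σ : Equiv.Perm (ΩN N)) :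
    Ycnt N σ σ = (Finset.univ.filter (tcond Prod.fst σ)).card +
      (Finset.univ.filter (tcond Prod.snd σ)).card := by
  unfold Ycnt tcond tc1 tc2 tc3
  congr 1

lemma sum_Ycnt_sq (N : ℕ) (hN : 3 ≤ N) :
    (∑ σ : Equiv.Perm (Fin N × Fin N), (Ycnt N σ σ) ^ 2) ≤
      400 * N ^ 4 * Nat.factorial (N ^ 2) := by
  classical
  have h1 := sum_cnt_sq N hN Prod.fst (fiber_fst N)
  have h2 := sum_cnt_sq N hN Prod.snd (fiber_snd N)
  have hle : (∑ σ : Equiv.Perm (Fin N × Fin N), (Ycnt N σ σ) ^ 2) ≤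
      ∑ σ : Equiv.Perm (ΩN N), (2 * ((Finset.univ.filter (tcond Prod.fst σ)).card) ^ 2 +
        2 * ((Finset.univ.filter (tcond Prod.snd σ)).card) ^ 2) := by
    refine Finset.sum_le_sum fun σ _ => ?_
    rw [Ycnt_eq]
    nlinarith [sq_nonneg ((Finset.univ.filter (tcond Prod.fst σ)).card -
      (Finset.univ.filter (tcond Prod.snd σ)).card : ℤ)]
  refine le_trans hle ?_
  rw [Finset.sum_add_distrib, ← Finset.mul_sum, ← Finset.mul_sum]
  calc 2 * (∑ σ : Equiv.Perm (ΩN N), ((Finset.univ.filter (tcond Prod.fst σ)).card) ^ 2) +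
        2 * (∑ σ : Equiv.Perm (ΩN N), ((Finset.univ.filter (tcond Prod.snd σ)).card) ^ 2)
      ≤ 2 * (100 * N ^ 4 * Nat.factorial (N ^ 2)) + 2 * (100 * N ^ 4 * Nat.factorial (N ^ 2)) := by
        have := Nat.mul_le_mul_left 2 h1
        have := Nat.mul_le_mul_left 2 h2
        omega
    _ = 400 * N ^ 4 * Nat.factorial (N ^ 2) := by ring

lemma card_bad (N m : ℕ) (hN : 3 ≤ N) :
    (Finset.univ.filter fun σ : Equiv.Perm (Fin N × Fin N) =>
      N ^ 3 ≤ (m + 1) * Ycnt N σ σ).card * ((N + 1) ^ 2) ≤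
      6400 * (m + 1) ^ 2 * Nat.factorial (N ^ 2) := by
  classical
  set B := Finset.univ.filter fun σ : Equiv.Perm (Fin N × Fin N) =>
    N ^ 3 ≤ (m + 1) * Ycnt N σ σ with hB
  have key : B.card * (N ^ 3 * N ^ 3) ≤ (m + 1) ^ 2 * (400 * N ^ 4 * Nat.factorial (N ^ 2)) := by
    calc B.card * (N ^ 3 * N ^ 3) = ∑ _σ ∈ B, N ^ 3 * N ^ 3 := by
          rw [Finset.sum_const, smul_eq_mul, Nat.mul_comm]
      _ ≤ ∑ σ ∈ B, (m + 1) ^ 2 * (Ycnt N σ σ) ^ 2 := by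
          refine Finset.sum_le_sum fun σ hσ => ?_
          have h := (Finset.mem_filter.1 hσ).2
          calc N ^ 3 * N ^ 3 ≤ ((m + 1) * Ycnt N σ σ) * ((m + 1) * Ycnt N σ σ) :=
              Nat.mul_le_mul h h
            _ = (m + 1) ^ 2 * (Ycnt N σ σ) ^ 2 := by ring
      _ ≤ ∑ σ : Equiv.Perm (Fin N × Fin N), (m + 1) ^ 2 * (Ycnt N σ σ) ^ 2 :=
          Finset.sum_le_sum_of_subset (Finset.filter_subset _ _)
      _ = (m + 1) ^ 2 * ∑ σ : Equiv.Perm (Fin N × Fin N), (Ycnt N σ σ) ^ 2 := by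
          rw [Finset.mul_sum]
      _ ≤ (m + 1) ^ 2 * (400 * N ^ 4 * Nat.factorial (N ^ 2)) :=
          Nat.mul_le_mul_left _ (sum_Ycnt_sq N hN)
  -- from card * N^6 ≤ (m+1)^2*400*N^4*fact deduce card*(N+1)^2 ≤ 6400*(m+1)^2*fact
  have hNpos : 0 < N := by omega
  have hstep : B.card * (N ^ 2 * N ^ 4) ≤ ((m + 1) ^ 2 * 400 * Nat.factorial (N ^ 2)) * N ^ 4 := by
    calc B.card * (N ^ 2 * N ^ 4) = B.card * (N ^ 3 * N ^ 3) := by ring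
      _ ≤ (m + 1) ^ 2 * (400 * N ^ 4 * Nat.factorial (N ^ 2)) := key
      _ = ((m + 1) ^ 2 * 400 * Nat.factorial (N ^ 2)) * N ^ 4 := by ring
  have hcancel : B.card * N ^ 2 ≤ (m + 1) ^ 2 * 400 * Nat.factorial (N ^ 2) := by
    have h4 : 0 < N ^ 4 := Nat.pow_pos hNpos
    have := hstep
    rw [show B.card * (N ^ 2 * N ^ 4) = (B.card * N ^ 2) * N ^ 4 by ring] at this
    exact Nat.le_of_mul_le_mul_right this h4
  have hsq : (N + 1) ^ 2 ≤ 16 * N ^ 2 := by nlinarith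
  calc B.card * ((N + 1) ^ 2) ≤ B.card * (16 * N ^ 2) := Nat.mul_le_mul_left _ hsq
    _ = 16 * (B.card * N ^ 2) := by ring
    _ ≤ 16 * ((m + 1) ^ 2 * 400 * Nat.factorial (N ^ 2)) := Nat.mul_le_mul_left _ hcancel
    _ = 6400 * (m + 1) ^ 2 * Nat.factorial (N ^ 2) := by ring

open MeasureTheory Filter
open scoped ENNReal NNReal

lemma summable_aux : (∑' N : ℕ, (((N : ℝ≥0∞) + 1) ^ 2)⁻¹) ≠ ⊤ := by
  have hcoe : ∀ N : ℕ, (((N : ℝ≥0∞) + 1) ^ 2)⁻¹ = (((((N : ℝ≥0) + 1) ^ 2)⁻¹ : ℝ≥0) : ℝ≥0∞) := by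
    intro N
    rw [show ((N : ℝ≥0∞) + 1) = ((((N : ℝ≥0) + 1) : ℝ≥0) : ℝ≥0∞) by push_cast; rfl,
      ← ENNReal.coe_pow, ← ENNReal.coe_inv (by positivity)]
  rw [tsum_congr hcoe]
  rw [ENNReal.tsum_coe_ne_top_iff_summable]
  rw [← NNReal.summable_coe]
  have h2 : Summable fun n : ℕ => ((n : ℝ) ^ 2)⁻¹ := by
    simpa [one_div] using Real.summable_one_div_nat_pow.2 (by norm_num : 1 < 2)
  have h3 := (summable_nat_add_iff 1).2 h2
  refine h3.congr fun n => ?_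
  push_cast
  simp

/-- `P` is the product, over `N`, of the uniform probability measures on the symmetric groups
`S([N]²)`: it is a probability measure on `∏_N S([N]²)` whose coordinates are independent and
uniformly distributed.  Then almost surely `Y_N(𝔖_N, 𝔖_N)/N³ → 0`, i.e. almost every
realization satisfies condition (C). -/
theorem stmt18 (P : Measure ((N : ℕ) → Equiv.Perm (Fin N × Fin N)))
    (hP : IsProbabilityMeasure P)
    (hindep : ProbabilityTheory.iIndepFun
      (fun N (ω : (k : ℕ) → Equiv.Perm (Fin k × Fin k)) => ω N) P)
    (hlaw : ∀ N : ℕ, P.map (fun ω => ω N) =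
      (PMF.uniformOfFintype (Equiv.Perm (Fin N × Fin N))).toMeasure) :
    ∀ᵐ ω ∂P, Tendsto (fun N : ℕ => (Ycnt N (ω N) (ω N) : ℝ) / (N : ℝ) ^ 3)
      atTop (nhds 0) := by
  classical
  set s : ℕ → ℕ → Set ((N : ℕ) → Equiv.Perm (Fin N × Fin N)) := fun m N =>
    {ω | N ^ 3 ≤ (m + 1) * Ycnt N (ω N) (ω N)} with hs
  have hbound : ∀ m N : ℕ, P (s m N) ≤
      (6400 * (m + 1) ^ 2 : ℝ≥0∞) / ((N : ℝ≥0∞) + 1) ^ 2 := by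
    intro m N
    have hNne0 : (((N : ℝ≥0∞) + 1) ^ 2) ≠ 0 := by
      refine pow_ne_zero 2 ?_
      exact (lt_of_lt_of_le zero_lt_one le_add_self).ne'
    have hNnetop : (((N : ℝ≥0∞) + 1) ^ 2) ≠ ⊤ := by
      refine ENNReal.pow_ne_top ?_
      simp [ENNReal.add_ne_top]
    by_cases hN : 3 ≤ N
    · set B := Finset.univ.filter fun σ : Equiv.Perm (Fin N × Fin N) =>
        N ^ 3 ≤ (m + 1) * Ycnt N σ σ with hBdef
      have hpre : s m N = (fun ω : (k : ℕ) → Equiv.Perm (Fin k × Fin k) => ω N) ⁻¹' ↑B := by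
        ext ω
        simp [hs, hBdef]
      have hmapped : P (s m N) = (P.map (fun ω => ω N)) ↑B := by
        rw [hpre, Measure.map_apply (measurable_pi_apply N) MeasurableSpace.measurableSet_top]
      rw [hmapped, hlaw N, PMF.toMeasure_apply_finset]
      have hone : ∀ σ ∈ B, (PMF.uniformOfFintype (Equiv.Perm (Fin N × Fin N))) σ =
          ((Fintype.card (Equiv.Perm (Fin N × Fin N)) : ℝ≥0∞))⁻¹ := fun σ _ =>
        PMF.uniformOfFintype_apply σ
      rw [Finset.sum_congr rfl hone, Finset.sum_const, nsmul_eq_mul]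
      have hfac : (Fintype.card (Equiv.Perm (Fin N × Fin N)) : ℝ≥0∞) =
          (Nat.factorial (N ^ 2) : ℝ≥0∞) := by
        norm_cast
        rw [Fintype.card_perm, cardΩ]
      rw [hfac, ← div_eq_mul_inv]
      have hfne0 : (Nat.factorial (N ^ 2) : ℝ≥0∞) ≠ 0 := by
        exact_mod_cast Nat.factorial_ne_zero _
      have hfnetop : (Nat.factorial (N ^ 2) : ℝ≥0∞) ≠ ⊤ := ENNReal.natCast_ne_top _
      rw [ENNReal.div_le_iff hfne0 hfnetop]
      have hcross : (B.card : ℝ≥0∞) * ((N : ℝ≥0∞) + 1) ^ 2 ≤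
          6400 * (m + 1) ^ 2 * (Nat.factorial (N ^ 2) : ℝ≥0∞) := by
        have hnat := card_bad N m hN
        calc (B.card : ℝ≥0∞) * ((N : ℝ≥0∞) + 1) ^ 2
            = ((B.card * (N + 1) ^ 2 : ℕ) : ℝ≥0∞) := by push_cast; ring
          _ ≤ ((6400 * (m + 1) ^ 2 * Nat.factorial (N ^ 2) : ℕ) : ℝ≥0∞) := by
              exact_mod_cast hnat
          _ = 6400 * (m + 1) ^ 2 * (Nat.factorial (N ^ 2) : ℝ≥0∞) := by push_cast; ring
      have := (ENNReal.le_div_iff_mul_le (Or.inl hNne0) (Or.inl hNnetop)).2 hcross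
      refine le_trans this (le_of_eq ?_)
      rw [ENNReal.div_eq_inv_mul, ENNReal.div_eq_inv_mul]
      ring
    · have h1 : P (s m N) ≤ 1 := prob_le_one
      refine le_trans h1 ?_
      rw [ENNReal.le_div_iff_mul_le (Or.inl hNne0) (Or.inl hNnetop), one_mul]
      have hle3 : ((N : ℝ≥0∞) + 1) ≤ 3 := by
        have : (N : ℝ≥0∞) ≤ 2 := by
          exact_mod_cast Nat.cast_le.2 (by omega : N ≤ 2)
        calc (N : ℝ≥0∞) + 1 ≤ 2 + 1 := by gcongr
          _ = 3 := by norm_num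
      calc ((N : ℝ≥0∞) + 1) ^ 2 ≤ 3 ^ 2 := pow_le_pow_left₀ (by positivity) hle3 2
        _ = 9 := by norm_num
        _ ≤ 6400 * (m + 1) ^ 2 := by
            have : (1 : ℝ≥0∞) ≤ (m + 1 : ℝ≥0∞) ^ 2 := one_le_pow_of_one_le' (by
              simpa using le_add_self) 2
            calc (9 : ℝ≥0∞) ≤ 6400 := by norm_num
              _ = 6400 * 1 := by ring
              _ ≤ 6400 * (m + 1) ^ 2 := mul_le_mul_right this _
  have hsum : ∀ m : ℕ, (∑' N : ℕ, P (s m N)) ≠ ⊤ := by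
    intro m
    refine ne_top_of_le_ne_top ?_ (ENNReal.tsum_le_tsum (hbound m))
    have : ∀ N : ℕ, (6400 * (m + 1) ^ 2 : ℝ≥0∞) / ((N : ℝ≥0∞) + 1) ^ 2 =
        (6400 * (m + 1) ^ 2 : ℝ≥0∞) * ((((N : ℝ≥0∞) + 1) ^ 2)⁻¹) := fun N => by
      rw [div_eq_mul_inv]
    rw [tsum_congr this, ENNReal.tsum_mul_left]
    refine ENNReal.mul_ne_top ?_ summable_aux
    refine ENNReal.mul_ne_top (by norm_num) ?_
    exact ENNReal.pow_ne_top (ENNReal.add_ne_top.2 ⟨ENNReal.natCast_ne_top _, ENNReal.one_ne_top⟩)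
  have hae : ∀ᵐ ω ∂P, ∀ m : ℕ, ∀ᶠ N in atTop, ω ∉ s m N := by
    rw [ae_all_iff]
    exact fun m => ae_eventually_notMem (hsum m)
  filter_upwards [hae] with ω hω
  rw [NormedAddCommGroup.tendsto_nhds_zero]
  intro ε hε
  obtain ⟨m, hm⟩ := exists_nat_one_div_lt hε
  filter_upwards [hω m, eventually_ge_atTop 1] with N h1 h2
  have hN0 : (0 : ℝ) < (N : ℝ) ^ 3 := by positivity
  have hm0 : (0 : ℝ) < (m : ℝ) + 1 := by positivity
  have hlt : (m + 1) * Ycnt N (ω N) (ω N) < N ^ 3 := by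
    by_contra hcon
    exact h1 (by simpa [hs] using Nat.le_of_not_lt hcon)
  have hltR : ((m : ℝ) + 1) * (Ycnt N (ω N) (ω N) : ℝ) < (N : ℝ) ^ 3 := by
    exact_mod_cast hlt
  rw [Real.norm_eq_abs, abs_of_nonneg (by positivity)]
  have hfinal : (Ycnt N (ω N) (ω N) : ℝ) / (N : ℝ) ^ 3 < 1 / ((m : ℝ) + 1) := by
    rw [div_lt_div_iff₀ hN0 hm0]
    linarith
  linarith
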